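/- Fix a = 1 - p(y_1) - p(y_2) and b = 4 p(y_1) p(y_2) with p(y_1) > p(y_2) > 0 and a ≥ 0. For λ ∈ [0, 1/a] (or [0,∞) if a=0), define f(λ) = ((1 - aλ)/2) log((1 - aλ)²/b) + aλ log λ. Then f is minimized at λ₊ = 1/(a + √b) = 1/(1 - (√p(y_1) - √p(y_2))²), and f(λ₊) = log λ₊ = -log(1 - (√p(y_1) - √p(y_2))²). -/

import Mathlib

open Real

lemma key_ineq (x c : ℝ) (hx : 0 ≤ x) (hc : 0 < c) : x - c ≤ x * Real.log (x / c) := by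
  rcases eq_or_lt_of_le hx with h | h
  · simp [← h]; linarith
  · have hlog : Real.log (c / x) ≤ c / x - 1 := Real.log_le_sub_one_of_pos (by positivity)
    have hneg : Real.log (x / c) = - Real.log (c / x) := by
      rw [← Real.log_inv]; congr 1; field_simp
    rw [hneg]
    have h2 := mul_le_mul_of_nonneg_left hlog (le_of_lt h)
    have h3 : x * (c / x - 1) = c - x := by field_simp
    nlinarith

theorem lambda_optimization (p1 p2 : ℝ) (h21 : p2 < p1) (h2 : 0 < p2) (hsum : p1 + p2 ≤ 1) :
    let a := 1 - p1 - p2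
    let b := 4 * p1 * p2
    let f : ℝ → ℝ := fun lam =>
      ((1 - a * lam) / 2) * Real.log ((1 - a * lam) ^ 2 / b) + a * lam * Real.log lam
    let lamp := 1 / (a + Real.sqrt b)
    (∀ lam : ℝ, 0 ≤ lam → a * lam ≤ 1 → f lamp ≤ f lam) ∧
    lamp = 1 / (1 - (Real.sqrt p1 - Real.sqrt p2) ^ 2) ∧
    f lamp = Real.log lamp ∧
    f lamp = -Real.log (1 - (Real.sqrt p1 - Real.sqrt p2) ^ 2) := by
  intro a b f lamp
  have h1 : 0 < p1 := lt_trans h2 h21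
  have hb : 0 < b := by simp only [b]; positivity
  set s := Real.sqrt b with hs_def
  have hs : 0 < s := Real.sqrt_pos.mpr hb
  have hs2 : s ^ 2 = b := Real.sq_sqrt hb.le
  have ha : 0 ≤ a := by simp only [a]; linarith
  have has : 0 < a + s := by linarith
  -- the identity a + s = 1 - (√p1 - √p2)^2
  have hsqrt : s = 2 * Real.sqrt p1 * Real.sqrt p2 := by
    rw [hs_def]
    rw [show b = (2 * Real.sqrt p1 * Real.sqrt p2) ^ 2 by
      have e1 : Real.sqrt p1 ^ 2 = p1 := Real.sq_sqrt h1.le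
      have e2 : Real.sqrt p2 ^ 2 = p2 := Real.sq_sqrt h2.le
      simp only [b]; nlinarith]
    exact Real.sqrt_sq (by positivity)
  have hid : a + s = 1 - (Real.sqrt p1 - Real.sqrt p2) ^ 2 := by
    have e1 : Real.sqrt p1 ^ 2 = p1 := Real.sq_sqrt h1.le
    have e2 : Real.sqrt p2 ^ 2 = p2 := Real.sq_sqrt h2.le
    simp only [a]; nlinarith
  have hlamp : lamp = 1 / (a + s) := rfl
  have hlamp_pos : 0 < lamp := by rw [hlamp]; positivity
  -- compute f lamp
  have h1a : 1 - a * lamp = s * lamp := by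
    rw [hlamp]; field_simp; ring
  have hflamp : f lamp = Real.log lamp := by
    show ((1 - a * lamp) / 2) * Real.log ((1 - a * lamp) ^ 2 / b) + a * lamp * Real.log lamp
        = Real.log lamp
    rw [h1a]
    have : (s * lamp) ^ 2 / b = lamp ^ 2 := by
      rw [← hs2]; field_simp
    rw [this, Real.log_pow]
    push_cast
    have hal : (a + s) * lamp = 1 := by rw [hlamp]; field_simp
    have : s * lamp / 2 * (2 * Real.log lamp) + a * lamp * Real.log lamp
        = ((a + s) * lamp) * Real.log lamp := by ring
    rw [this, hal, one_mul]
  have hloglamp : Real.log lamp = - Real.log (a + s) := by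
    rw [hlamp, Real.log_div one_ne_zero (ne_of_gt has), Real.log_one]; ring
  refine ⟨?_, by rw [hlamp, hid], hflamp, by rw [hflamp, hloglamp, hid]⟩
  -- the minimization
  intro lam hlam hallam
  rw [hflamp, hloglamp]
  show - Real.log (a + s) ≤
      ((1 - a * lam) / 2) * Real.log ((1 - a * lam) ^ 2 / b) + a * lam * Real.log lam
  rcases eq_or_lt_of_le hlam with hl0 | hl0
  · -- lam = 0
    rw [← hl0]
    simp only [mul_zero, Real.log_zero, sub_zero, one_pow, zero_mul, add_zero]
    have : Real.log (1 / b) = - (2 * Real.log s) := by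
      rw [Real.log_div one_ne_zero (ne_of_gt hb), Real.log_one, ← hs2, Real.log_pow]
      push_cast; ring
    rw [this]
    have : Real.log s ≤ Real.log (a + s) := Real.log_le_log hs (by linarith)
    linarith
  rcases eq_or_lt_of_le hallam with hl1 | hl1
  · -- a * lam = 1
    rw [hl1]
    norm_num
    have hag : 0 < a := by
      rcases ha.lt_or_eq with h | h
      · exact h
      · exfalso; rw [← h] at hl1; simp at hl1
    have hlamge : lamp ≤ lam := by
      rw [hlamp]
      rw [div_le_iff₀ has]
      nlinarith
    calc - Real.log (a + s) = Real.log lamp := hloglamp.symm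
      _ ≤ Real.log lam := Real.log_le_log hlamp_pos hlamge
  · -- 0 < lam, a*lam < 1
    have hu : 0 < 1 - a * lam := by linarith
    have hlog2 : Real.log ((1 - a * lam) ^ 2 / b) = 2 * (Real.log (1 - a * lam) - Real.log s) := by
      rw [Real.log_div (by positivity) (ne_of_gt hb), Real.log_pow, ← hs2, Real.log_pow]
      push_cast; ring
    rw [hlog2]
    have k1 : (1 - a * lam) - s / (a + s) ≤
        (1 - a * lam) * Real.log ((1 - a * lam) / (s / (a + s))) :=
      key_ineq _ _ hu.le (by positivity)
    have k2 : lam - 1 / (a + s) ≤ lam * Real.log (lam / (1 / (a + s))) :=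
      key_ineq _ _ hl0.le (by positivity)
    have k2' : a * lam - a / (a + s) ≤ a * (lam * Real.log (lam / (1 / (a + s)))) := by
      have := mul_le_mul_of_nonneg_left k2 ha
      calc a * lam - a / (a + s) = a * (lam - 1 / (a + s)) := by ring
        _ ≤ _ := this
    have e1 : Real.log ((1 - a * lam) / (s / (a + s)))
        = Real.log (1 - a * lam) - Real.log s + Real.log (a + s) := by
      rw [Real.log_div (ne_of_gt hu) (by positivity),
        Real.log_div (ne_of_gt hs) (ne_of_gt has)]
      ring
    have e2 : Real.log (lam / (1 / (a + s))) = Real.log lam + Real.log (a + s) := by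
      rw [Real.log_div (ne_of_gt hl0) (by positivity),
        Real.log_div one_ne_zero (ne_of_gt has), Real.log_one]
      ring
    rw [e1] at k1
    rw [e2] at k2'
    have hsum' : s / (a + s) + a / (a + s) = 1 := by field_simp; ring
    nlinarith [k1, k2']
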